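/- Let σ₁, σ₂ ∈ S(k) with σ₁σ₂ = (1,2,…,k), and let q : C(σ₂) → {2,3,…} with ∑_{c∈C(σ₂)} q(c) = |C(σ₁)|+|C(σ₂)|. Then condition (e): 'for every non-trivial A ⊂ C(σ₂) (A ≠ ∅, A ≠ C(σ₂)), more than ∑_{i∈A}(q(i)−1) cycles of σ₁ intersect ⋃A' is equivalent to condition (e²): 'for every non-trivial A ⊂ C(σ₂) there exist two marriage arrangements M₁, M₂ : C(σ₁) → C(σ₂) (each girl j ∈ C(σ₂) has exactly q(j)−1 husbands, and each boy is married only to a girl whose cycle intersects his) with M₁⁻¹(A) ≠ M₂⁻¹(A)'. -/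

import Mathlib

open Finset Equiv
open scoped Classical

/-- The cycle (orbit) of the point `x` under the permutation `σ`, as a set of points. -/
noncomputable def orbitOf {k : ℕ} (σ : Perm (Fin k)) (x : Fin k) : Finset (Fin k) :=
  Finset.univ.filter fun y => σ.SameCycle x y

/-- The set `C(σ)` of cycles of `σ`, each cycle represented by its set of points. -/
noncomputable def cyclesOf {k : ℕ} (σ : Perm (Fin k)) : Finset (Finset (Fin k)) :=
  Finset.univ.image (orbitOf σ)

/-- The number of cycles of `σ₁` which intersect `⋃ A`. -/
noncomputable def meetCount {k : ℕ} (σ₁ : Perm (Fin k))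
    (A : Finset (Finset (Fin k))) : ℕ :=
  ((cyclesOf σ₁).filter fun d => (d ∩ A.biUnion id).Nonempty).card

/-- A marriage arrangement: a map `M` assigning to each cycle (boy) of `σ₁` a cycle
(girl) of `σ₂` intersecting it, in such a way that each cycle `j` of `σ₂` has exactly
`q(j) − 1` husbands. -/
noncomputable def IsMarriage {k : ℕ} (σ₁ σ₂ : Perm (Fin k))
    (q : Finset (Fin k) → ℕ) (M : Finset (Fin k) → Finset (Fin k)) : Prop :=
  (∀ d ∈ cyclesOf σ₁, M d ∈ cyclesOf σ₂ ∧ (d ∩ M d).Nonempty) ∧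
  (∀ e ∈ cyclesOf σ₂, ((cyclesOf σ₁).filter fun d => M d = e).card = q e - 1)

lemma mem_orbitOf_self {k : ℕ} (σ : Perm (Fin k)) (x : Fin k) : x ∈ orbitOf σ x := by
  simp only [orbitOf, Finset.mem_filter, Finset.mem_univ, true_and]
  exact Equiv.Perm.SameCycle.refl σ x

lemma orbit_mem_cyclesOf {k : ℕ} (σ : Perm (Fin k)) (x : Fin k) :
    orbitOf σ x ∈ cyclesOf σ := Finset.mem_image_of_mem _ (Finset.mem_univ x)

lemma cyclesOf_nonempty {k : ℕ} {σ : Perm (Fin k)} {d : Finset (Fin k)}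
    (hd : d ∈ cyclesOf σ) : d.Nonempty := by
  obtain ⟨x, -, rfl⟩ := Finset.mem_image.1 hd
  exact ⟨x, mem_orbitOf_self σ x⟩

noncomputable def slots {k : ℕ} (q : Finset (Fin k) → ℕ) (e : Finset (Fin k)) :
    Finset (Finset (Fin k) × ℕ) := (Finset.range (q e - 1)).image fun i => (e, i)

lemma card_slots {k : ℕ} (q : Finset (Fin k) → ℕ) (e : Finset (Fin k)) :
    (slots q e).card = q e - 1 := by
  rw [slots, Finset.card_image_of_injective _ (fun i j h => by simpa using h),
    Finset.card_range]

lemma fst_of_mem_slots {k : ℕ} {q : Finset (Fin k) → ℕ} {e : Finset (Fin k)}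
    {p : Finset (Fin k) × ℕ} (hp : p ∈ slots q e) : p.1 = e := by
  obtain ⟨i, -, rfl⟩ := Finset.mem_image.1 hp; rfl

lemma card_biUnion_slots {k : ℕ} (q : Finset (Fin k) → ℕ) (G : Finset (Finset (Fin k))) :
    (G.biUnion (slots q)).card = ∑ e ∈ G, (q e - 1) := by
  rw [Finset.card_biUnion]
  · exact Finset.sum_congr rfl fun e _ => card_slots q e
  · intro e _ e' _ hne
    simp only [Finset.disjoint_left]
    intro p hp hp'
    exact hne ((fst_of_mem_slots hp).symm.trans (fst_of_mem_slots hp'))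

lemma card_filter_mem {k : ℕ} (S A : Finset (Finset (Fin k)))
    (M : Finset (Fin k) → Finset (Fin k)) :
    (S.filter (fun d => M d ∈ A)).card = ∑ e ∈ A, (S.filter (fun d => M d = e)).card := by
  rw [← Finset.card_biUnion]
  · congr 1
    ext d
    simp only [Finset.mem_biUnion, Finset.mem_filter]
    constructor
    · rintro ⟨hd, hMd⟩; exact ⟨M d, hMd, hd, rfl⟩
    · rintro ⟨e, he, hd, rfl⟩; exact ⟨hd, he⟩
  · intro e _ e' _ hne
    simp only [Finset.disjoint_left, Finset.mem_filter]
    rintro d ⟨-, rfl⟩ ⟨-, h⟩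
    exact hne h

lemma marriage_card {k : ℕ} {σ₁ σ₂ : Perm (Fin k)} {q : Finset (Fin k) → ℕ}
    {M : Finset (Fin k) → Finset (Fin k)} (hM : IsMarriage σ₁ σ₂ q M)
    {A : Finset (Finset (Fin k))} (hA : A ⊆ cyclesOf σ₂) :
    ((cyclesOf σ₁).filter (fun d => M d ∈ A)).card = ∑ e ∈ A, (q e - 1) := by
  rw [card_filter_mem]
  exact Finset.sum_congr rfl fun e he => hM.2 e (hA he)

lemma marriage_subset_meet {k : ℕ} {σ₁ σ₂ : Perm (Fin k)} {q : Finset (Fin k) → ℕ}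
    {M : Finset (Fin k) → Finset (Fin k)} (hM : IsMarriage σ₁ σ₂ q M)
    (A : Finset (Finset (Fin k))) :
    (cyclesOf σ₁).filter (fun d => M d ∈ A) ⊆
      (cyclesOf σ₁).filter fun d => (d ∩ A.biUnion id).Nonempty := by
  intro d hd
  rw [Finset.mem_filter] at hd ⊢
  obtain ⟨hd1, hd2⟩ := hd
  obtain ⟨x, hx⟩ := (hM.1 d hd1).2
  rw [Finset.mem_inter] at hx
  exact ⟨hd1, ⟨x, Finset.mem_inter.2 ⟨hx.1, Finset.mem_biUnion.2 ⟨M d, hd2, hx.2⟩⟩⟩⟩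

lemma sum_qsub1 {k : ℕ} {σ₁ σ₂ : Perm (Fin k)} {q : Finset (Fin k) → ℕ}
    (hq : ∀ c ∈ cyclesOf σ₂, 2 ≤ q c)
    (hsum : ∑ c ∈ cyclesOf σ₂, q c = (cyclesOf σ₁).card + (cyclesOf σ₂).card) :
    ∑ c ∈ cyclesOf σ₂, (q c - 1) = (cyclesOf σ₁).card := by
  have h1 : ∑ c ∈ cyclesOf σ₂, q c = ∑ c ∈ cyclesOf σ₂, ((q c - 1) + 1) :=
    Finset.sum_congr rfl fun c hc => by have := hq c hc; omega
  rw [Finset.sum_add_distrib, Finset.sum_const, smul_eq_mul, mul_one] at h1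
  omega

lemma exists_marriage_forced {k : ℕ} (σ₁ σ₂ : Perm (Fin k))
    (q : Finset (Fin k) → ℕ) (hq : ∀ c ∈ cyclesOf σ₂, 2 ≤ q c)
    (hsum : ∑ c ∈ cyclesOf σ₂, q c = (cyclesOf σ₁).card + (cyclesOf σ₂).card)
    (heN : ∀ A ⊆ cyclesOf σ₂, A.Nonempty → A ≠ cyclesOf σ₂ →
        (∑ c ∈ A, (q c - 1)) + 1 ≤ meetCount σ₁ A)
    (b g : Finset (Fin k)) (hb : b ∈ cyclesOf σ₁) (hg : g ∈ cyclesOf σ₂)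
    (hbg : (b ∩ g).Nonempty) :
    ∃ M, IsMarriage σ₁ σ₂ q M ∧ M b = g := by
  set n := (cyclesOf σ₁).card with hn
  have hsum' : ∑ c ∈ cyclesOf σ₂, (q c - 1) = n := sum_qsub1 hq hsum
  set ι := {d // d ∈ cyclesOf σ₁} with hι
  have hcardι : Fintype.card ι = n := Fintype.card_coe _
  -- girls meeting a boy
  set Nd : Finset (Fin k) → Finset (Finset (Fin k)) :=
    fun d => (cyclesOf σ₂).filter fun e => (d ∩ e).Nonempty with hNd
  set t : ι → Finset (Finset (Fin k) × ℕ) := fun d => (Nd d.1).biUnion (slots q) with ht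
  set sb : ι := ⟨b, hb⟩ with hsb
  set t' : ι → Finset (Finset (Fin k) × ℕ) :=
    fun d => if d.1 = b then {(g, 0)} else (t d).erase (g, 0) with ht'
  -- every boy meets a girl
  have hNd_ne : ∀ d : ι, (Nd d.1).Nonempty := by
    intro d
    obtain ⟨x, hx⟩ := cyclesOf_nonempty d.2
    exact ⟨orbitOf σ₂ x, Finset.mem_filter.2 ⟨orbit_mem_cyclesOf σ₂ x,
      ⟨x, Finset.mem_inter.2 ⟨hx, mem_orbitOf_self σ₂ x⟩⟩⟩⟩
  -- the neighborhood of a set of boys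
  have hbiUnion_t : ∀ s : Finset ι,
      s.biUnion t = (s.biUnion fun d => Nd d.1).biUnion (slots q) := by
    intro s
    ext p
    simp only [ht, Finset.mem_biUnion]
    tauto
  -- surplus lemma
  have surplus : ∀ s : Finset ι, s.Nonempty →
      (s.biUnion fun d => Nd d.1) = cyclesOf σ₂ ∨
        s.card + 1 ≤ ∑ e ∈ s.biUnion (fun d => Nd d.1), (q e - 1) := by
    intro s hs
    set NS := s.biUnion fun d => Nd d.1 with hNS
    have hNSsub : NS ⊆ cyclesOf σ₂ := by
      intro e he
      obtain ⟨d, -, hd⟩ := Finset.mem_biUnion.1 he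
      exact (Finset.mem_filter.1 hd).1
    by_cases hNSeq : NS = cyclesOf σ₂
    · exact Or.inl hNSeq
    right
    have hNSne : NS.Nonempty := by
      obtain ⟨d, hd⟩ := hs
      obtain ⟨e, he⟩ := hNd_ne d
      exact ⟨e, Finset.mem_biUnion.2 ⟨d, hd, he⟩⟩
    set A := cyclesOf σ₂ \ NS with hA
    have hAsub : A ⊆ cyclesOf σ₂ := Finset.sdiff_subset
    have hAne : A.Nonempty := by
      rw [hA, Finset.sdiff_nonempty]
      exact fun h => hNSeq (Finset.Subset.antisymm hNSsub h)
    have hAneq : A ≠ cyclesOf σ₂ := by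
      obtain ⟨e, he⟩ := hNSne
      intro h
      have : e ∈ A := h ▸ hNSsub he
      exact (Finset.mem_sdiff.1 this).2 he
    have h1 := heN A hAsub hAne hAneq
    -- boys meeting ⋃A avoid the boys in s
    have h2 : ((cyclesOf σ₁).filter fun d => (d ∩ A.biUnion id).Nonempty) ⊆
        cyclesOf σ₁ \ s.image Subtype.val := by
      intro d hd
      rw [Finset.mem_filter] at hd
      rw [Finset.mem_sdiff]
      refine ⟨hd.1, fun hmem => ?_⟩
      obtain ⟨d₀, hd₀, rfl⟩ := Finset.mem_image.1 hmem
      obtain ⟨x, hx⟩ := hd.2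
      rw [Finset.mem_inter] at hx
      obtain ⟨e, he, hxe⟩ := Finset.mem_biUnion.1 hx.2
      have heNS : e ∈ NS := Finset.mem_biUnion.2 ⟨d₀, hd₀,
        Finset.mem_filter.2 ⟨hAsub he, ⟨x, Finset.mem_inter.2 ⟨hx.1, hxe⟩⟩⟩⟩
      exact (Finset.mem_sdiff.1 (hA ▸ he)).2 heNS
    have himgcard : (s.image Subtype.val).card = s.card :=
      Finset.card_image_of_injective _ Subtype.val_injective
    have himgsub : s.image Subtype.val ⊆ cyclesOf σ₁ := by
      intro d hd
      obtain ⟨d₀, -, rfl⟩ := Finset.mem_image.1 hd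
      exact d₀.2
    have h3 : meetCount σ₁ A ≤ n - s.card := by
      have := Finset.card_le_card h2
      rw [Finset.card_sdiff_of_subset himgsub, himgcard] at this
      exact this
    have h4 : ∑ e ∈ NS, (q e - 1) + ∑ e ∈ A, (q e - 1) = n := by
      rw [← hsum', hA, ← Finset.sum_sdiff hNSsub]
      have : cyclesOf σ₂ \ NS ⊆ cyclesOf σ₂ := Finset.sdiff_subset
      ring
    have h5 : s.card ≤ n := by
      calc s.card = (s.image Subtype.val).card := himgcard.symm
        _ ≤ n := Finset.card_le_card himgsub
    omega
  -- Hall's condition for t'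
  have hall : ∀ s : Finset ι, s.card ≤ (s.biUnion t').card := by
    intro s
    rcases s.eq_empty_or_nonempty with rfl | hs
    · simp
    have hcard_lt : ∀ s₀ : Finset ι, sb ∉ s₀ → s₀.card + 1 ≤ n := by
      intro s₀ hsb₀
      have : s₀ ⊆ Finset.univ.erase sb := fun x hx =>
        Finset.mem_erase.2 ⟨fun h => hsb₀ (h ▸ hx), Finset.mem_univ x⟩
      have := Finset.card_le_card this
      rw [Finset.card_erase_of_mem (Finset.mem_univ sb), Finset.card_univ, hcardι] at this
      have hn1 : 1 ≤ n := Finset.card_pos.2 ⟨b, hb⟩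
      omega
    by_cases hsbs : sb ∈ s
    · -- b is among the boys
      set s' := s.erase sb with hs'
      have hne' : ∀ d ∈ s', d.1 ≠ b := by
        intro d hd h
        exact (Finset.mem_erase.1 hd).1 (Subtype.ext h)
      have hsub : insert ((g, 0) : Finset (Fin k) × ℕ) (s'.biUnion t') ⊆ s.biUnion t' := by
        intro p hp
        rcases Finset.mem_insert.1 hp with rfl | hp
        · refine Finset.mem_biUnion.2 ⟨sb, hsbs, ?_⟩
          simp [ht', hsb]
        · obtain ⟨d, hd, hpd⟩ := Finset.mem_biUnion.1 hp
          exact Finset.mem_biUnion.2 ⟨d, Finset.mem_of_mem_erase hd, hpd⟩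
      have hgnot : ((g, 0) : Finset (Fin k) × ℕ) ∉ s'.biUnion t' := by
        intro hp
        obtain ⟨d, hd, hpd⟩ := Finset.mem_biUnion.1 hp
        simp only [ht'] at hpd
        simp only [hne' d hd, if_false] at hpd
        exact (Finset.mem_erase.1 hpd).1 rfl
      have hcard1 : s'.card + 1 = s.card := by
        rw [hs', Finset.card_erase_of_mem hsbs]
        have : 1 ≤ s.card := Finset.card_pos.2 hs
        omega
      have hkey : s'.card + 1 ≤ (insert ((g, 0) : Finset (Fin k) × ℕ) (s'.biUnion t')).card := by
        rw [Finset.card_insert_of_notMem hgnot]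
        rcases s'.eq_empty_or_nonempty with h | h
        · simp [h]
        · -- s' nonempty
          have herase : s'.biUnion t' = (s'.biUnion t).erase (g, 0) := by
            ext p
            simp only [Finset.mem_biUnion, Finset.mem_erase, ht']
            constructor
            · rintro ⟨d, hd, hpd⟩
              simp only [hne' d hd, if_false, Finset.mem_erase] at hpd
              exact ⟨hpd.1, d, hd, hpd.2⟩
            · rintro ⟨hp, d, hd, hpd⟩
              refine ⟨d, hd, ?_⟩
              simp only [hne' d hd, if_false]
              exact Finset.mem_erase.2 ⟨hp, hpd⟩
          have hle : (s'.biUnion t).card ≤ (s'.biUnion t').card + 1 := by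
            rw [herase]
            have := Finset.card_erase_le (s := s'.biUnion t) (a := ((g, 0) : Finset (Fin k) × ℕ))
            have h2 := Finset.card_le_card
              (Finset.insert_erase_subset ((g, 0) : Finset (Fin k) × ℕ) (s'.biUnion t))
            calc (s'.biUnion t).card
                ≤ (insert ((g,0) : Finset (Fin k) × ℕ) ((s'.biUnion t).erase (g,0))).card := h2
              _ ≤ ((s'.biUnion t).erase (g,0)).card + 1 := Finset.card_insert_le _ _
          have hbig : s'.card + 1 ≤ (s'.biUnion t).card := by
            rw [hbiUnion_t, card_biUnion_slots]
            rcases surplus s' h with heq | hlt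
            · rw [heq, hsum']
              exact hcard_lt s' (Finset.notMem_erase sb s)
            · exact hlt
          omega
      calc s.card = s'.card + 1 := hcard1.symm
        _ ≤ (insert ((g,0) : Finset (Fin k) × ℕ) (s'.biUnion t')).card := hkey
        _ ≤ (s.biUnion t').card := Finset.card_le_card hsub
    · -- b not among the boys
      have hne' : ∀ d ∈ s, d.1 ≠ b := by
        intro d hd h
        have hd' : d = sb := Subtype.ext (by rw [h, hsb])
        exact hsbs (hd' ▸ hd)
      have herase : s.biUnion t' = (s.biUnion t).erase (g, 0) := by
        ext p
        simp only [Finset.mem_biUnion, Finset.mem_erase, ht']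
        constructor
        · rintro ⟨d, hd, hpd⟩
          simp only [hne' d hd, if_false, Finset.mem_erase] at hpd
          exact ⟨hpd.1, d, hd, hpd.2⟩
        · rintro ⟨hp, d, hd, hpd⟩
          refine ⟨d, hd, ?_⟩
          simp only [hne' d hd, if_false]
          exact Finset.mem_erase.2 ⟨hp, hpd⟩
      have hle : (s.biUnion t).card ≤ (s.biUnion t').card + 1 := by
        rw [herase]
        have h2 := Finset.card_le_card
          (Finset.insert_erase_subset ((g, 0) : Finset (Fin k) × ℕ) (s.biUnion t))
        calc (s.biUnion t).card
            ≤ (insert ((g,0) : Finset (Fin k) × ℕ) ((s.biUnion t).erase (g,0))).card := h2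
          _ ≤ ((s.biUnion t).erase (g,0)).card + 1 := Finset.card_insert_le _ _
      have hbig : s.card + 1 ≤ (s.biUnion t).card := by
        rw [hbiUnion_t, card_biUnion_slots]
        rcases surplus s hs with heq | hlt
        · rw [heq, hsum']
          exact hcard_lt s hsbs
        · exact hlt
      omega
  obtain ⟨f, hfinj, hf⟩ := (Finset.all_card_le_biUnion_card_iff_exists_injective t').1 hall
  set allS := (cyclesOf σ₂).biUnion (slots q) with hallS
  have hcard_allS : allS.card = n := by rw [hallS, card_biUnion_slots, hsum']
  have hg0 : ((g, 0) : Finset (Fin k) × ℕ) ∈ slots q g := by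
    rw [slots]
    exact Finset.mem_image.2 ⟨0, Finset.mem_range.2 (by have := hq g hg; omega), rfl⟩
  have ht'sub : ∀ d : ι, t' d ⊆ allS := by
    intro d p hp
    simp only [ht'] at hp
    by_cases hdb : d.1 = b
    · rw [if_pos hdb, Finset.mem_singleton] at hp
      exact hp ▸ Finset.mem_biUnion.2 ⟨g, hg, hg0⟩
    · rw [if_neg hdb] at hp
      obtain ⟨e, he, hpe⟩ := Finset.mem_biUnion.1 (Finset.mem_of_mem_erase hp)
      exact Finset.mem_biUnion.2 ⟨e, (Finset.mem_filter.1 he).1, hpe⟩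
  have himg : Finset.univ.image f = allS := by
    apply Finset.eq_of_subset_of_card_le
    · intro p hp
      obtain ⟨x, -, rfl⟩ := Finset.mem_image.1 hp
      exact ht'sub x (hf x)
    · rw [Finset.card_image_of_injective _ hfinj, Finset.card_univ, hcardι, hcard_allS]
  set M : Finset (Fin k) → Finset (Fin k) :=
    fun d => if h : d ∈ cyclesOf σ₁ then (f ⟨d, h⟩).1 else ∅ with hM
  have hMval : ∀ x : ι, M x.1 = (f x).1 := by
    intro x
    rw [hM]
    simp only [x.2, dif_pos]
    rfl
  have hfb : f sb = (g, 0) := by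
    have := hf sb
    rw [ht'] at this
    simp only [hsb, if_pos] at this
    exact Finset.mem_singleton.1 this
  have hMb : M b = g := by
    have := hMval sb
    rw [hsb] at this
    rw [this, hfb]
  have hfst : ∀ x : ι, (f x).1 ∈ cyclesOf σ₂ ∧ (x.1 ∩ (f x).1).Nonempty := by
    intro x
    have hfx := hf x
    simp only [ht'] at hfx
    by_cases hdb : x.1 = b
    · rw [if_pos hdb, Finset.mem_singleton] at hfx
      rw [hfx]
      exact ⟨hg, hdb ▸ hbg⟩
    · rw [if_neg hdb] at hfx
      obtain ⟨e, he, hpe⟩ := Finset.mem_biUnion.1 (Finset.mem_of_mem_erase hfx)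
      rw [Finset.mem_filter] at he
      rw [fst_of_mem_slots hpe]
      exact ⟨he.1, he.2⟩
  refine ⟨M, ⟨?_, ?_⟩, hMb⟩
  · intro d hd
    have := hfst ⟨d, hd⟩
    rw [← hMval ⟨d, hd⟩] at this
    exact this
  · intro e he
    rw [← card_slots q e]
    apply Finset.card_bij (fun d hd => f ⟨d, (Finset.mem_filter.1 hd).1⟩)
    · intro d hd
      set x : ι := ⟨d, (Finset.mem_filter.1 hd).1⟩ with hx
      have h1 : f x ∈ allS := ht'sub x (hf x)
      obtain ⟨e', he', hpe'⟩ := Finset.mem_biUnion.1 h1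
      have h2 : (f x).1 = e' := fst_of_mem_slots hpe'
      have h3 : M d = e := (Finset.mem_filter.1 hd).2
      rw [hMval x] at h3
      rw [h3] at h2
      rw [← h2] at hpe'
      exact hpe'
    · intro d1 hd1 d2 hd2 hfe
      have := hfinj hfe
      exact congrArg Subtype.val this
    · intro p hp
      have hpS : p ∈ allS := Finset.mem_biUnion.2 ⟨e, he, hp⟩
      rw [← himg] at hpS
      obtain ⟨x, -, hxp⟩ := Finset.mem_image.1 hpS
      refine ⟨x.1, ?_, ?_⟩
      · refine Finset.mem_filter.2 ⟨x.2, ?_⟩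
        rw [hMval x, hxp, fst_of_mem_slots hp]
      · simp only [Subtype.coe_eta]
        exact hxp

lemma cast_sum_q {k : ℕ} {q : Finset (Fin k) → ℕ} {A : Finset (Finset (Fin k))}
    (hq1 : ∀ c ∈ A, 1 ≤ q c) :
    ((∑ c ∈ A, (q c - 1) : ℕ) : ℤ) = ∑ c ∈ A, ((q c : ℤ) - 1) := by
  rw [Nat.cast_sum]
  refine Finset.sum_congr rfl fun c hc => ?_
  have := hq1 c hc
  omega

/-- Let `σ₁ σ₂ = (1,2,…,k)` and `q : C(σ₂) → {2,3,…}` with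
`∑_c q(c) = |C(σ₁)| + |C(σ₂)|`. Then condition (e): every non-trivial `A ⊂ C(σ₂)` is
intersected by more than `∑_{i∈A}(q(i)−1)` cycles of `σ₁`, is equivalent to condition
(e²): for every non-trivial `A ⊂ C(σ₂)` there are two marriage arrangements `M₁, M₂`
whose sets of husbands of wives from `A` differ. -/
theorem condition_e_iff_e2 {k : ℕ} (σ₁ σ₂ : Perm (Fin k))
    (hfact : σ₁ * σ₂ = finRotate k)
    (q : Finset (Fin k) → ℕ) (hq : ∀ c ∈ cyclesOf σ₂, 2 ≤ q c)
    (hsum : ∑ c ∈ cyclesOf σ₂, q c = (cyclesOf σ₁).card + (cyclesOf σ₂).card) :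
    (∀ A ⊆ cyclesOf σ₂, A.Nonempty → A ≠ cyclesOf σ₂ →
        (∑ c ∈ A, ((q c : ℤ) - 1)) < (meetCount σ₁ A : ℤ)) ↔
    (∀ A ⊆ cyclesOf σ₂, A.Nonempty → A ≠ cyclesOf σ₂ →
        ∃ M₁ M₂ : Finset (Fin k) → Finset (Fin k),
          IsMarriage σ₁ σ₂ q M₁ ∧ IsMarriage σ₁ σ₂ q M₂ ∧
          (cyclesOf σ₁).filter (fun d => M₁ d ∈ A) ≠
            (cyclesOf σ₁).filter (fun d => M₂ d ∈ A)) := by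
  constructor
  · intro he A hA hAne hAneq
    have heN : ∀ B ⊆ cyclesOf σ₂, B.Nonempty → B ≠ cyclesOf σ₂ →
        (∑ c ∈ B, (q c - 1)) + 1 ≤ meetCount σ₁ B := by
      intro B hB h1 h2
      have h := he B hB h1 h2
      rw [← cast_sum_q (fun c hc => by have := hq c (hB hc); omega)] at h
      exact_mod_cast h
    obtain ⟨g0, hg0⟩ := id hAne
    have hg0c : g0 ∈ cyclesOf σ₂ := hA hg0
    obtain ⟨x, hx⟩ := cyclesOf_nonempty hg0c
    have hb0 : orbitOf σ₁ x ∈ cyclesOf σ₁ := orbit_mem_cyclesOf σ₁ x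
    have hint0 : (orbitOf σ₁ x ∩ g0).Nonempty :=
      ⟨x, Finset.mem_inter.2 ⟨mem_orbitOf_self σ₁ x, hx⟩⟩
    obtain ⟨M₁, hM₁, -⟩ := exists_marriage_forced σ₁ σ₂ q hq hsum heN _ g0 hb0 hg0c hint0
    have hcard1 := marriage_card hM₁ hA
    have hlt := heN A hA hAne hAneq
    have hssub : (cyclesOf σ₁).filter (fun d => M₁ d ∈ A) ⊂
        (cyclesOf σ₁).filter fun d => (d ∩ A.biUnion id).Nonempty := by
      rw [Finset.ssubset_iff_subset_ne]
      refine ⟨marriage_subset_meet hM₁ A, fun heq => ?_⟩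
      rw [meetCount, ← heq, hcard1] at hlt
      omega
    obtain ⟨bb, hbmeet, hbnot⟩ := Finset.exists_of_ssubset hssub
    have hbc : bb ∈ cyclesOf σ₁ := (Finset.mem_filter.1 hbmeet).1
    obtain ⟨y, hy⟩ := (Finset.mem_filter.1 hbmeet).2
    rw [Finset.mem_inter] at hy
    obtain ⟨g, hgA, hyg⟩ := Finset.mem_biUnion.1 hy.2
    obtain ⟨M₂, hM₂, hM₂b⟩ := exists_marriage_forced σ₁ σ₂ q hq hsum heN bb g hbc (hA hgA)
      ⟨y, Finset.mem_inter.2 ⟨hy.1, hyg⟩⟩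
    refine ⟨M₁, M₂, hM₁, hM₂, fun h => ?_⟩
    have h1 : bb ∈ (cyclesOf σ₁).filter (fun d => M₂ d ∈ A) :=
      Finset.mem_filter.2 ⟨hbc, hM₂b ▸ hgA⟩
    rw [← h] at h1
    exact hbnot h1
  · intro he2 A hA hAne hAneq
    obtain ⟨M₁, M₂, hM₁, hM₂, hne⟩ := he2 A hA hAne hAneq
    set S₁ := (cyclesOf σ₁).filter (fun d => M₁ d ∈ A) with hS₁
    set S₂ := (cyclesOf σ₁).filter (fun d => M₂ d ∈ A) with hS₂
    set T := (cyclesOf σ₁).filter (fun d => (d ∩ A.biUnion id).Nonempty) with hT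
    have hc1 : S₁.card = ∑ e ∈ A, (q e - 1) := marriage_card hM₁ hA
    have hc2 : S₂.card = ∑ e ∈ A, (q e - 1) := marriage_card hM₂ hA
    have hsub1 : S₁ ⊆ T := marriage_subset_meet hM₁ A
    have hsub2 : S₂ ⊆ T := marriage_subset_meet hM₂ A
    have hex : ∃ x, (x ∈ S₁ ∧ x ∉ S₂) ∨ (x ∈ S₂ ∧ x ∉ S₁) := by
      by_contra hcon
      push_neg at hcon
      apply hne
      ext z
      have := hcon z
      tauto
    have hmeet : ∑ e ∈ A, (q e - 1) + 1 ≤ T.card := by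
      obtain ⟨z, hz⟩ := hex
      rcases hz with ⟨h1, h2⟩ | ⟨h1, h2⟩
      · have : insert z S₂ ⊆ T := Finset.insert_subset (hsub1 h1) hsub2
        have hcard := Finset.card_le_card this
        rw [Finset.card_insert_of_notMem h2, hc2] at hcard
        exact hcard
      · have : insert z S₁ ⊆ T := Finset.insert_subset (hsub2 h1) hsub1
        have hcard := Finset.card_le_card this
        rw [Finset.card_insert_of_notMem h2, hc1] at hcard
        exact hcard
    rw [← cast_sum_q (fun c hc => by have := hq c (hA hc); omega)]
    rw [meetCount, ← hT]
    exact_mod_cast Nat.lt_of_lt_of_le (Nat.lt_succ_self _) hmeet
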